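/- Under the Continuum Hypothesis ω₁ = 𝔠, the usco multimap P⁻¹ : [0,1]² ⊸ Ï² admits an F_σ-measurable selection, where P : Ï² → [0,1]² is the square of the projection p : Ï → [0,1]. -/

import Mathlib

/-- The split interval: `[0,1] × {0,1}` with the lexicographic order. -/
abbrev SplitInterval : Type := Set.Icc (0:ℝ) 1 ×ₗ Bool

instance : TopologicalSpace SplitInterval := Preorder.topology SplitInterval

instance : OrderTopology SplitInterval := ⟨rfl⟩

/-- The projection `⟨x,i⟩ ↦ x` of the split interval onto the unit interval. -/
def splitProj : SplitInterval → Set.Icc (0:ℝ) 1 := fun a => (ofLex a).1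

/-- The square `P = p × p` of the projection `p`. -/
def splitProjSq : SplitInterval × SplitInterval → Set.Icc (0:ℝ) 1 × Set.Icc (0:ℝ) 1 :=
  fun z => (splitProj z.1, splitProj z.2)

/-- A set is `Fσ` if it is a countable union of closed sets. -/
def IsFsigma {X : Type*} [TopologicalSpace X] (s : Set X) : Prop :=
  ∃ F : ℕ → Set X, (∀ n, IsClosed (F n)) ∧ s = ⋃ n, F n

namespace SplitSel

open Set

noncomputable section
open Classical

abbrev II : Type := Set.Icc (0:ℝ) 1

/-! ### Fσ basics -/

theorem IsFsigma.of_isClosed {X : Type*} [TopologicalSpace X] {s : Set X} (h : IsClosed s) :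
    IsFsigma s :=
  ⟨fun _ => s, fun _ => h, (Set.iUnion_const s).symm⟩

theorem isFsigma_empty {X : Type*} [TopologicalSpace X] : IsFsigma (∅ : Set X) :=
  IsFsigma.of_isClosed isClosed_empty

theorem isFsigma_iUnion {X ι : Type*} [TopologicalSpace X] [Countable ι] (f : ι → Set X)
    (h : ∀ i, IsFsigma (f i)) : IsFsigma (⋃ i, f i) := by
  rcases isEmpty_or_nonempty ι with hι | hι
  · rw [Set.iUnion_of_empty]; exact isFsigma_empty
  · choose F hFc hFu using h
    obtain ⟨σ, hσ⟩ := exists_surjective_nat ι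
    refine ⟨fun m => F (σ m.unpair.1) m.unpair.2, fun m => hFc _ _, ?_⟩
    ext x
    simp only [mem_iUnion]
    constructor
    · rintro ⟨i, hx⟩
      rw [hFu i] at hx
      obtain ⟨n, hn⟩ := mem_iUnion.1 hx
      obtain ⟨k, rfl⟩ := hσ i
      exact ⟨Nat.pair k n, by simpa [Nat.unpair_pair] using hn⟩
    · rintro ⟨m, hm⟩
      refine ⟨σ m.unpair.1, ?_⟩
      rw [hFu]
      exact mem_iUnion.2 ⟨m.unpair.2, hm⟩

theorem isFsigma_biUnion {X α : Type*} [TopologicalSpace X] {A : Set α} (hA : A.Countable)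
    (f : α → Set X) (h : ∀ a ∈ A, IsFsigma (f a)) : IsFsigma (⋃ a ∈ A, f a) := by
  haveI := hA.to_subtype
  rw [Set.biUnion_eq_iUnion]
  exact isFsigma_iUnion _ fun a => h a a.2

theorem IsFsigma.union {X : Type*} [TopologicalSpace X] {s t : Set X} (hs : IsFsigma s)
    (ht : IsFsigma t) : IsFsigma (s ∪ t) := by
  rw [Set.union_eq_iUnion]
  exact isFsigma_iUnion _ fun b => by cases b <;> simpa

theorem Countable.isFsigma {X : Type*} [TopologicalSpace X] [T1Space X] {s : Set X}
    (hs : s.Countable) : IsFsigma s := by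
  rcases s.eq_empty_or_nonempty with rfl | hne
  · exact isFsigma_empty
  · obtain ⟨g, rfl⟩ := hs.exists_eq_range hne
    refine ⟨fun n => {g n}, fun n => isClosed_singleton, ?_⟩
    rw [Set.iUnion_singleton_eq_range]

theorem IsOpen.isFsigma {X : Type*} [PseudoMetricSpace X] {s : Set X} (hs : IsOpen s) :
    IsFsigma s := by
  rcases eq_empty_or_nonempty sᶜ with hc | hc
  · have : s = Set.univ := by
      rw [← Set.compl_empty, ← hc, compl_compl]
    rw [this]; exact IsFsigma.of_isClosed isClosed_univ
  refine ⟨fun n => {x | (1:ℝ)/(n+1) ≤ Metric.infDist x sᶜ}, fun n => ?_, ?_⟩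
  · exact isClosed_le continuous_const (Metric.continuous_infDist_pt _)
  · ext x
    simp only [Set.mem_iUnion, Set.mem_setOf_eq]
    constructor
    · intro hx
      have hpos : 0 < Metric.infDist x sᶜ :=
        (hs.isClosed_compl.notMem_iff_infDist_pos hc).1 (by simpa using hx)
      obtain ⟨n, hn⟩ := exists_nat_one_div_lt hpos
      exact ⟨n, le_of_lt (by exact_mod_cast hn)⟩
    · rintro ⟨n, hn⟩
      by_contra hx
      have : Metric.infDist x sᶜ = 0 := Metric.infDist_zero_of_mem (by simpa using hx)
      rw [this] at hn
      have : (0:ℝ) < 1/(n+1) := by positivity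
      linarith

/-! ### one-sided intervals in `II` -/

/-- Half-open one-sided interval at `x` in direction `c` (including `x`). -/
def K (x : II) (ε : ℝ) (c : Bool) : Set II :=
  {t : II | if c then (x ≤ t ∧ (t:ℝ) < (x:ℝ) + ε) else ((x:ℝ) - ε < (t:ℝ) ∧ t ≤ x)}

/-- Open one-sided interval at `x` in direction `c` (excluding `x`). -/
def oK (x : II) (ε : ℝ) (c : Bool) : Set II :=
  {t : II | if c then ((x:ℝ) < (t:ℝ) ∧ (t:ℝ) < (x:ℝ) + ε) else ((x:ℝ) - ε < (t:ℝ) ∧ (t:ℝ) < (x:ℝ))}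

theorem mem_K_self (x : II) {ε : ℝ} (hε : 0 < ε) (c : Bool) : x ∈ K x ε c := by
  cases c <;> simp [K] <;> linarith

theorem oK_subset_K (x : II) (ε : ℝ) (c : Bool) : oK x ε c ⊆ K x ε c := by
  intro t ht
  cases c <;> simp [K, oK] at *
  · exact ⟨ht.1, le_of_lt ht.2⟩
  · exact ⟨le_of_lt ht.1, ht.2⟩

theorem K_mono (x : II) {ε ε' : ℝ} (h : ε ≤ ε') (c : Bool) : K x ε c ⊆ K x ε' c := by
  intro t ht
  cases c <;> simp [K] at *
  · exact ⟨by linarith [ht.1], ht.2⟩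
  · exact ⟨ht.1, by linarith [ht.2]⟩

theorem isOpen_oK (x : II) (ε : ℝ) (c : Bool) : IsOpen (oK x ε c) := by
  have h1 : oK x ε c = (fun t : II => (t:ℝ)) ⁻¹'
      (if c then Set.Ioo ((x:ℝ)) ((x:ℝ)+ε) else Set.Ioo ((x:ℝ)-ε) (x:ℝ)) := by
    cases c <;> rfl
  rw [h1]
  cases c <;> exact isOpen_Ioo.preimage continuous_subtype_val

/-! ### box-open sets and good colourings -/

def BoxOpen (φ : II → Bool) (W : Set (II × II)) : Prop :=
  ∀ z ∈ W, ∃ ε > (0:ℝ), ∀ z' : II × II,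
    z'.1 ∈ K z.1 ε (φ z.1) → z'.2 ∈ K z.2 ε (φ z.2) → z' ∈ W

/-- A strictly monotone "matching" in the square; `neg = true` means strictly decreasing. -/
def StrM (neg : Bool) (M : Set (II × II)) : Prop :=
  ∀ p ∈ M, ∀ q ∈ M, p ≠ q →
    p.1 ≠ q.1 ∧ p.2 ≠ q.2 ∧ (p.1 < q.1 → (if neg then q.2 < p.2 else p.2 < q.2))

/-- A two-colouring of `[0,1]` such that monochromatic strictly decreasing matchings and
bichromatic strictly increasing matchings are countable. -/
def GoodColoring (φ : II → Bool) : Prop :=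
  (∀ M, StrM true M → (∀ p ∈ M, φ p.1 = φ p.2) → M.Countable) ∧
  (∀ M, StrM false M → (∀ p ∈ M, φ p.1 ≠ φ p.2) → M.Countable)

theorem countable_of_injOn_rat {α : Type*} {S : Set α} (f : α → ℚ) (hf : Set.InjOn f S) :
    S.Countable :=
  Set.countable_of_injective_of_countable_image hf (Set.to_countable _)

/-- 1-dimensional Sorgenfrey-type lemma: a set of reals which contains a half-open
interval (in a point-dependent direction) around each of its points is open union countable. -/
theorem oneDim (τ : Set II) (b : II → Bool) (ε : II → ℝ) (hε : ∀ y ∈ τ, 0 < ε y)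
    (h : ∀ y ∈ τ, K y (ε y) (b y) ⊆ τ) :
    ∃ O C : Set II, IsOpen O ∧ C.Countable ∧ τ = O ∪ C ∧ O ⊆ τ := by
  classical
  set O : Set II := ⋃ y ∈ τ, oK y (ε y) (b y) with hO
  have hOopen : IsOpen O := isOpen_biUnion fun y _ => isOpen_oK y (ε y) (b y)
  have hOτ : O ⊆ τ := by
    intro t ht
    obtain ⟨y, hy, hty⟩ := Set.mem_iUnion₂.1 ht
    exact h y hy (oK_subset_K _ _ _ hty)
  refine ⟨O, τ \ O, hOopen, ?_, by rw [Set.union_diff_self, Set.union_eq_self_of_subset_left hOτ],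
    hOτ⟩
  -- countability of the residue
  have hquo : ∀ y ∈ τ, ∃ q : ℚ, if b y then ((y:ℝ) < q ∧ (q:ℝ) < (y:ℝ) + ε y)
      else ((y:ℝ) - ε y < q ∧ (q:ℝ) < (y:ℝ)) := by
    intro y hy
    cases hb : b y <;> simp only [if_pos, if_neg, Bool.false_eq_true, if_false, if_true]
    · obtain ⟨q, hq1, hq2⟩ := exists_rat_btwn (show (y:ℝ) - ε y < (y:ℝ) by
        have := hε y hy; linarith)
      exact ⟨q, hq1, hq2⟩
    · obtain ⟨q, hq1, hq2⟩ := exists_rat_btwn (show (y:ℝ) < (y:ℝ) + ε y by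
        have := hε y hy; linarith)
      exact ⟨q, hq1, hq2⟩
  choose! q hq using hquo
  have hsplit : τ \ O = ((τ \ O) ∩ {y | b y = false}) ∪ ((τ \ O) ∩ {y | b y = true}) := by
    ext y; by_cases hy : b y = true <;> simp [hy]
  rw [hsplit]
  apply Set.Countable.union
  · apply countable_of_injOn_rat q
    intro y hy y' hy' hqq
    by_contra hne
    have hby : b y = false := hy.2
    have hby' : b y' = false := hy'.2
    have hqy := hq y hy.1.1
    have hqy' := hq y' hy'.1.1
    rw [hby] at hqy; rw [hby'] at hqy'
    simp only [Bool.false_eq_true, if_false] at hqy hqy'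
    rcases lt_or_gt_of_ne (fun hee : y = y' => hne hee) with hlt | hgt
    · -- y < y' : then y ∈ oK y' …
      apply hy.1.2
      refine Set.mem_biUnion hy'.1.1 ?_
      rw [show oK y' (ε y') (b y') = oK y' (ε y') false by rw [hby']]
      exact ⟨by rw [← hqq] at hqy'; linarith [hqy.2, hqy'.1], Subtype.coe_lt_coe.2 hlt⟩
    · apply hy'.1.2
      refine Set.mem_biUnion hy.1.1 ?_
      rw [show oK y (ε y) (b y) = oK y (ε y) false by rw [hby]]
      exact ⟨by rw [hqq] at hqy; linarith [hqy'.2, hqy.1], Subtype.coe_lt_coe.2 hgt⟩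
  · apply countable_of_injOn_rat q
    intro y hy y' hy' hqq
    by_contra hne
    have hby : b y = true := hy.2
    have hby' : b y' = true := hy'.2
    have hqy := hq y hy.1.1
    have hqy' := hq y' hy'.1.1
    rw [hby] at hqy; rw [hby'] at hqy'
    simp only [if_true] at hqy hqy'
    rcases lt_or_gt_of_ne (fun hee : y = y' => hne hee) with hlt | hgt
    · apply hy'.1.2
      refine Set.mem_biUnion hy.1.1 ?_
      rw [show oK y (ε y) (b y) = oK y (ε y) true by rw [hby]]
      exact ⟨Subtype.coe_lt_coe.2 hlt, by rw [hqq] at hqy; linarith [hqy'.1, hqy.2]⟩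
    · apply hy.1.2
      refine Set.mem_biUnion hy'.1.1 ?_
      rw [show oK y' (ε y') (b y') = oK y' (ε y') true by rw [hby']]
      exact ⟨Subtype.coe_lt_coe.2 hgt, by rw [← hqq] at hqy'; linarith [hqy.1, hqy'.2]⟩

/-- The key geometric lemma: a set avoiding, pairwise, a fixed "quadrant pattern", and lying
in a fixed colour region, is covered by countably many vertical and horizontal lines. -/
theorem piece_lines {φ : II → Bool} (hφ : GoodColoring φ) (c d : Bool) (S : Set (II × II))
    (hc : ∀ p ∈ S, φ p.1 = c) (hd : ∀ p ∈ S, φ p.2 = d)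
    (hS : ∀ p ∈ S, ∀ q ∈ S, ¬(((if c then ((p.1:ℝ) < (q.1:ℝ)) else ((q.1:ℝ) < (p.1:ℝ)))) ∧
                              ((if d then ((p.2:ℝ) < (q.2:ℝ)) else ((q.2:ℝ) < (p.2:ℝ)))))) :
    ∃ A B : Set II, A.Countable ∧ B.Countable ∧ S ⊆ {z | z.1 ∈ A ∨ z.2 ∈ B} := by
  classical
  set B : Set II := {y | ∃ p ∈ S, ∃ q ∈ S, p.2 = y ∧ q.2 = y ∧ p.1 ≠ q.1} with hBdef
  have hwit : ∀ y ∈ B, ∃ pq : (II × II) × (II × II), ∃ t : ℚ, pq.1 ∈ S ∧ pq.2 ∈ S ∧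
      pq.1.2 = y ∧ pq.2.2 = y ∧ ((pq.1.1:ℝ) < (t:ℝ) ∧ (t:ℝ) < (pq.2.1:ℝ)) := by
    rintro y ⟨p, hp, q, hq, hpy, hqy, hne⟩
    rcases lt_or_gt_of_ne (fun h : p.1 = q.1 => hne h) with h | h
    · obtain ⟨t, ht1, ht2⟩ := exists_rat_btwn (Subtype.coe_lt_coe.2 h)
      exact ⟨(p, q), t, hp, hq, hpy, hqy, ht1, ht2⟩
    · obtain ⟨t, ht1, ht2⟩ := exists_rat_btwn (Subtype.coe_lt_coe.2 h)
      exact ⟨(q, p), t, hq, hp, hqy, hpy, ht1, ht2⟩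
  choose! pq tw hw1 hw2 hw3 hw4 hw5 using hwit
  have hBc : B.Countable := by
    apply countable_of_injOn_rat tw
    intro y hy y' hy' ht
    by_contra hne
    have key : ∀ a b2, a ∈ B → b2 ∈ B → (a:ℝ) < (b2:ℝ) → tw a = tw b2 → False := by
      intro a b2 ha hb hab htham
      have h1a := (hw5 a ha).1
      have h2a := (hw5 a ha).2
      have h1b := (hw5 b2 hb).1
      have h2b := (hw5 b2 hb).2
      rw [htham] at h1a h2a
      cases c <;> cases d
      · exact hS (pq b2).2 (hw2 b2 hb) (pq a).1 (hw1 a ha)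
          ⟨by simp only [Bool.false_eq_true, if_false]; linarith,
           by simp only [Bool.false_eq_true, if_false]
              rw [hw3 a ha, hw4 b2 hb]; exact hab⟩
      · exact hS (pq a).2 (hw2 a ha) (pq b2).1 (hw1 b2 hb)
          ⟨by simp only [Bool.false_eq_true, if_false]; linarith,
           by simp only [if_true]
              rw [hw4 a ha, hw3 b2 hb]; exact hab⟩
      · exact hS (pq b2).1 (hw1 b2 hb) (pq a).2 (hw2 a ha)
          ⟨by simp only [if_true]; linarith,
           by simp only [Bool.false_eq_true, if_false]
              rw [hw3 b2 hb, hw4 a ha]; exact hab⟩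
      · exact hS (pq a).1 (hw1 a ha) (pq b2).2 (hw2 b2 hb)
          ⟨by simp only [if_true]; linarith,
           by simp only [if_true]
              rw [hw3 a ha, hw4 b2 hb]; exact hab⟩
    rcases lt_or_gt_of_ne (fun h : y = y' => hne h) with h | h
    · exact key y y' hy hy' (Subtype.coe_lt_coe.2 h) ht
    · exact key y' y hy' hy (Subtype.coe_lt_coe.2 h) ht.symm
  -- transversal of the part off the thick levels
  set S' : Set (II × II) := {p ∈ S | p.2 ∉ B} with hS'def
  have hproj : ∀ x ∈ Prod.fst '' S', ∃ p, p ∈ S' ∧ p.1 = x := by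
    rintro x ⟨p, hp, he⟩; exact ⟨p, hp, he⟩
  choose! w hwmem hwfst using hproj
  set M : Set (II × II) := w '' (Prod.fst '' S') with hMdef
  have hMsub : ∀ p ∈ M, p ∈ S' := by
    rintro p ⟨x, hx, rfl⟩; exact hwmem x hx
  have hMstr : ∀ p ∈ M, ∀ q ∈ M, p ≠ q →
      p.1 ≠ q.1 ∧ p.2 ≠ q.2 ∧ ((p.1:ℝ) < (q.1:ℝ) →
        (if (c == d) then ((q.2:ℝ) < (p.2:ℝ)) else ((p.2:ℝ) < (q.2:ℝ)))) := by
    intro p hp q hq hpq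
    obtain ⟨x, hx, rfl⟩ := hp
    obtain ⟨x', hx', rfl⟩ := hq
    have hxx : x ≠ x' := fun h => hpq (by rw [h])
    have h1 : (w x).1 ≠ (w x').1 := by rw [hwfst x hx, hwfst x' hx']; exact hxx
    have hwS : w x ∈ S := (hMsub _ ⟨x, hx, rfl⟩).1
    have hwS' : w x' ∈ S := (hMsub _ ⟨x', hx', rfl⟩).1
    have h2 : (w x).2 ≠ (w x').2 := by
      intro he
      apply (hMsub _ ⟨x, hx, rfl⟩).2
      exact ⟨w x, hwS, w x', hwS', rfl, he.symm, h1⟩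
    refine ⟨h1, h2, fun hlt => ?_⟩
    have h2r : ((w x).2:ℝ) ≠ ((w x').2:ℝ) := fun h => h2 (Subtype.ext h)
    cases c <;> cases d <;> simp only [Bool.false_eq_true, if_false, if_true, beq_iff_eq,
      Bool.true_eq_false, reduceIte]
    · -- c=false d=false : decreasing
      have := hS (w x') hwS' (w x) hwS
      simp only [Bool.false_eq_true, if_false] at this
      rcases lt_or_ge ((w x').2 : ℝ) ((w x).2 : ℝ) with hh | hh
      · exact hh
      · exact absurd ⟨hlt, lt_of_le_of_ne hh h2r⟩ this
    · -- c=false d=true : increasing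
      have := hS (w x') hwS' (w x) hwS
      simp only [Bool.false_eq_true, if_false, if_true] at this
      rcases lt_or_ge ((w x).2 : ℝ) ((w x').2 : ℝ) with hh | hh
      · exact hh
      · exact absurd ⟨hlt, lt_of_le_of_ne hh h2r.symm⟩ this
    · -- c=true d=false : increasing
      have := hS (w x) hwS (w x') hwS'
      simp only [Bool.false_eq_true, if_false, if_true] at this
      rcases lt_or_ge ((w x).2 : ℝ) ((w x').2 : ℝ) with hh | hh
      · exact hh
      · exact absurd ⟨hlt, lt_of_le_of_ne hh h2r.symm⟩ this
    · -- c=true d=true : decreasing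
      have := hS (w x) hwS (w x') hwS'
      simp only [if_true] at this
      rcases lt_or_ge ((w x').2 : ℝ) ((w x).2 : ℝ) with hh | hh
      · exact hh
      · exact absurd ⟨hlt, lt_of_le_of_ne hh h2r⟩ this
  have hMstr' : StrM (c == d) M := by
    intro p hp q hq hpq
    obtain ⟨e1, e2, e3⟩ := hMstr p hp q hq hpq
    exact ⟨e1, e2, fun hlt => by
      have := e3 (Subtype.coe_lt_coe.2 hlt)
      cases hcd : (c == d) <;> rw [hcd] at this <;> simp only [Bool.false_eq_true, if_false,
        if_true] at this ⊢ <;> exact Subtype.coe_lt_coe.1 this⟩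
  have hMc : M.Countable := by
    have hcol : ∀ p ∈ M, φ p.1 = c ∧ φ p.2 = d := fun p hp =>
      ⟨hc p (hMsub p hp).1, hd p (hMsub p hp).1⟩
    cases hc2 : c <;> cases hd2 : d
    · exact hφ.1 M (by simpa [hc2, hd2] using hMstr') (fun p hp => by
        rw [(hcol p hp).1, (hcol p hp).2, hc2, hd2])
    · exact hφ.2 M (by simpa [hc2, hd2] using hMstr') (fun p hp => by
        rw [(hcol p hp).1, (hcol p hp).2, hc2, hd2]; simp)
    · exact hφ.2 M (by simpa [hc2, hd2] using hMstr') (fun p hp => by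
        rw [(hcol p hp).1, (hcol p hp).2, hc2, hd2]; simp)
    · exact hφ.1 M (by simpa [hc2, hd2] using hMstr') (fun p hp => by
        rw [(hcol p hp).1, (hcol p hp).2, hc2, hd2])
  refine ⟨Prod.fst '' M, B, hMc.image _, hBc, ?_⟩
  intro p hp
  by_cases hpB : p.2 ∈ B
  · exact Or.inr hpB
  · left
    have hpS' : p ∈ S' := ⟨hp, hpB⟩
    have hx : p.1 ∈ Prod.fst '' S' := ⟨p, hpS', rfl⟩
    exact ⟨w p.1, ⟨p.1, hx, rfl⟩, hwfst p.1 hx⟩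

/-! ### Construction of a good colouring under CH -/

/-- weakly decreasing relation -/
def WkAnti (R : Set (II × II)) : Prop := ∀ p ∈ R, ∀ q ∈ R, p.1 < q.1 → q.2 ≤ p.2

/-- weakly increasing relation -/
def WkInc (R : Set (II × II)) : Prop := ∀ p ∈ R, ∀ q ∈ R, p.1 < q.1 → p.2 ≤ q.2

/-- the family of closed weakly monotone relations on the unit interval -/
def Fam : Type := {R : Set (II × II) // IsClosed R ∧ (WkAnti R ∨ WkInc R)}

/-- parity of a relation: `true` = decreasing -/
noncomputable def par (g : Fam) : Bool := if WkAnti g.1 then true else false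

/-- strict part of a relation: the points which are alone in their row and column -/
def sP (R : Set (II × II)) : Set (II × II) :=
  {p | p ∈ R ∧ ∀ q ∈ R, (q.1 = p.1 ∨ q.2 = p.2) → q = p}

theorem sP_subset (R : Set (II × II)) : sP R ⊆ R := fun _ h => h.1

theorem strM_of_wk {R : Set (II × II)} {b : Bool}
    (h : if b then WkAnti R else WkInc R) : StrM b (sP R) := by
  intro p hp q hq hpq
  have h1 : p.1 ≠ q.1 := fun he => hpq (hq.2 p hp.1 (Or.inl he))
  have h2 : p.2 ≠ q.2 := fun he => hpq (hq.2 p hp.1 (Or.inr he))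
  refine ⟨h1, h2, fun hlt => ?_⟩
  cases b
  · simp only [Bool.false_eq_true, if_false] at h ⊢
    exact lt_of_le_of_ne (h p hp.1 q hq.1 hlt) h2
  · simp only [if_true] at h ⊢
    exact lt_of_le_of_ne (h p hp.1 q hq.1 hlt) h2.symm

theorem strm_sP (g : Fam) : StrM (par g) (sP g.1) := by
  apply strM_of_wk
  by_cases h : WkAnti g.1
  · simp only [par, if_pos h]; exact h
  · simp only [par, if_neg h]
    rcases g.2.2 with h' | h'
    · exact absurd h' h
    · exact h'

/-- inverse relation -/
def rinv (S : Set (II × II)) : Set (II × II) := {p | (p.2, p.1) ∈ S}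

/-- composition of relations -/
def rcomp (S T : Set (II × II)) : Set (II × II) := {p | ∃ c, (p.1, c) ∈ S ∧ (c, p.2) ∈ T}

theorem strm_rinv {b : Bool} {S : Set (II × II)} (h : StrM b S) : StrM b (rinv S) := by
  intro p hp q hq hpq
  have hpq' : ((p.2 : II), (p.1 : II)) ≠ (q.2, q.1) := by
    intro he
    exact hpq (Prod.ext (congrArg Prod.snd he) (congrArg Prod.fst he))
  obtain ⟨h1, h2, h3⟩ := h _ hp _ hq hpq'
  obtain ⟨_, _, h3'⟩ := h _ hq _ hp hpq'.symm
  simp only at h1 h2 h3 h3'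
  refine ⟨h2, h1, fun hlt => ?_⟩
  cases b
  · simp only [Bool.false_eq_true, if_false] at h3 h3' ⊢
    rcases lt_trichotomy p.2 q.2 with hh | hh | hh
    · exact hh
    · exact absurd hh h1
    · exact absurd (h3' hh) (not_lt_of_gt hlt)
  · simp only [if_true] at h3 h3' ⊢
    rcases lt_trichotomy q.2 p.2 with hh | hh | hh
    · exact hh
    · exact absurd hh.symm h1
    · exact absurd (h3 hh) (not_lt_of_gt hlt)

theorem strm_rcomp {b c : Bool} {S T : Set (II × II)} (hS : StrM b S) (hT : StrM c T) :
    StrM (xor b c) (rcomp S T) := by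
  rintro p ⟨m, hpm, hmp⟩ q ⟨m', hqm, hmq⟩ hpq
  have h1 : p.1 ≠ q.1 := by
    intro he
    have hmm : m = m' := by
      by_contra hne
      have hd : ((p.1 : II), m) ≠ (q.1, m') := fun h => hne (Prod.ext_iff.1 h).2
      exact (hS _ hpm _ hqm hd).1 he
    rw [hmm] at hmp
    have h22 : p.2 = q.2 := by
      by_contra hne
      have hd : ((m' : II), p.2) ≠ (m', q.2) := fun h => hne (Prod.ext_iff.1 h).2
      exact (hT _ hmp _ hmq hd).1 rfl
    exact hpq (Prod.ext he h22)
  have hmm' : m ≠ m' := by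
    intro he
    have hd : ((p.1 : II), m) ≠ (q.1, m') := fun h => h1 (Prod.ext_iff.1 h).1
    exact (hS _ hpm _ hqm hd).2.1 he
  have h2 : p.2 ≠ q.2 := by
    intro he
    have hd : ((m : II), p.2) ≠ (m', q.2) := fun h => hmm' (Prod.ext_iff.1 h).1
    exact (hT _ hmp _ hmq hd).2.1 he
  refine ⟨h1, h2, fun hlt => ?_⟩
  have hdS : ((p.1 : II), m) ≠ (q.1, m') := fun h => h1 (Prod.ext_iff.1 h).1
  have hdT : ((m : II), p.2) ≠ (m', q.2) := fun h => hmm' (Prod.ext_iff.1 h).1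
  have hmo := (hS _ hpm _ hqm hdS).2.2 hlt
  cases b
  · simp only [Bool.false_eq_true, if_false] at hmo
    have hconc := (hT _ hmp _ hmq hdT).2.2 hmo
    cases c
    · simpa using hconc
    · simpa using hconc
  · simp only [if_true] at hmo
    have hconc := (hT _ hmq _ hmp hdT.symm).2.2 hmo
    cases c
    · simpa using hconc
    · simpa using hconc

theorem strm_diag : StrM false {p : II × II | p.1 = p.2} := by
  rintro p hp q hq hpq
  have hp' : p.1 = p.2 := hp
  have hq' : q.1 = q.2 := hq
  have h1 : p.1 ≠ q.1 := by
    intro he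
    exact hpq (Prod.ext he (by rw [← hp', ← hq', he]))
  refine ⟨h1, by rw [← hp', ← hq']; exact h1, fun hlt => ?_⟩
  simp only [Bool.false_eq_true, if_false]
  rw [← hp', ← hq']; exact hlt

theorem strm_fix {S : Set (II × II)} (h : StrM true S) {x y : II}
    (hx : (x, x) ∈ S) (hy : (y, y) ∈ S) : x = y := by
  by_contra hne
  have hd : ((x : II), x) ≠ (y, y) := fun he => hne (congrArg Prod.fst he)
  obtain ⟨h1, _, h3⟩ := h _ hx _ hy hd
  obtain ⟨_, _, h3'⟩ := h _ hy _ hx hd.symm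
  rcases lt_trichotomy x y with hh | hh | hh
  · simp only [if_true] at h3
    exact absurd (h3 hh) (not_lt_of_gt hh)
  · exact hne hh
  · simp only [if_true] at h3'
    exact absurd (h3' hh) (not_lt_of_gt hh)

abbrev Letter : Type := Fam × Bool

noncomputable def letterRel (l : Letter) : Set (II × II) :=
  if l.2 then rinv (sP l.1.1) else sP l.1.1

noncomputable def letterPar (l : Letter) : Bool := par l.1

theorem strm_letter (l : Letter) : StrM (letterPar l) (letterRel l) := by
  unfold letterRel letterPar
  cases hl : l.2
  · simp only [Bool.false_eq_true, if_false]; exact strm_sP l.1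
  · simp only [if_true]; exact strm_rinv (strm_sP l.1)

noncomputable def wordRel : List Letter → Set (II × II)
  | [] => {p : II × II | p.1 = p.2}
  | l :: w => rcomp (letterRel l) (wordRel w)

noncomputable def wordPar : List Letter → Bool
  | [] => false
  | l :: w => xor (letterPar l) (wordPar w)

theorem strm_word (w : List Letter) : StrM (wordPar w) (wordRel w) := by
  induction w with
  | nil => exact strm_diag
  | cons l w ih => exact strm_rcomp (strm_letter l) ih

theorem prod_dist_coord {p p' : II × II} {δ : ℝ} (h : dist p p' < δ) :
    |(p.1:ℝ) - (p'.1:ℝ)| < δ ∧ |(p.2:ℝ) - (p'.2:ℝ)| < δ := by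
  rw [Prod.dist_eq] at h
  constructor
  · have h2 := lt_of_le_of_lt (le_max_left (dist p.1 p'.1) (dist p.2 p'.2)) h
    rwa [Subtype.dist_eq, Real.dist_eq] at h2
  · have h2 := lt_of_le_of_lt (le_max_right (dist p.1 p'.1) (dist p.2 p'.2)) h
    rwa [Subtype.dist_eq, Real.dist_eq] at h2

theorem wkAnti_closure {M : Set (II × II)} (h : StrM true M) : WkAnti (closure M) := by
  intro p hp q hq hlt
  by_contra hcon
  push_neg at hcon
  have hlt' : (p.1:ℝ) < q.1 := Subtype.coe_lt_coe.2 hlt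
  have hcon' : (p.2:ℝ) < q.2 := Subtype.coe_lt_coe.2 hcon
  set δ := min ((q.1:ℝ) - p.1) ((q.2:ℝ) - p.2) / 3 with hδ
  have hδpos : 0 < δ := div_pos (lt_min (by linarith) (by linarith)) (by norm_num)
  have hδa : 3*δ ≤ (q.1:ℝ) - p.1 := by
    have := min_le_left ((q.1:ℝ) - (p.1:ℝ)) ((q.2:ℝ) - (p.2:ℝ))
    rw [hδ]; linarith
  have hδb : 3*δ ≤ (q.2:ℝ) - p.2 := by
    have := min_le_right ((q.1:ℝ) - (p.1:ℝ)) ((q.2:ℝ) - (p.2:ℝ))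
    rw [hδ]; linarith
  obtain ⟨p', hp'M, hp'd⟩ := Metric.mem_closure_iff.1 hp δ hδpos
  obtain ⟨q', hq'M, hq'd⟩ := Metric.mem_closure_iff.1 hq δ hδpos
  obtain ⟨hp1, hp2⟩ := prod_dist_coord hp'd
  obtain ⟨hq1, hq2⟩ := prod_dist_coord hq'd
  rw [abs_lt] at hp1 hp2 hq1 hq2
  have h1 : (p'.1:ℝ) < q'.1 := by linarith [hp1.1, hp1.2, hq1.1, hq1.2]
  have h2 : (p'.2:ℝ) < q'.2 := by linarith [hp2.1, hp2.2, hq2.1, hq2.2]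
  have hne : p' ≠ q' := fun he => lt_irrefl ((q'.1:ℝ)) (by rw [he] at h1; exact h1)
  have hres := (h p' hp'M q' hq'M hne).2.2 (Subtype.coe_lt_coe.1 h1)
  simp only [if_true] at hres
  exact absurd h2 (not_lt_of_gt (Subtype.coe_lt_coe.2 hres))

theorem wkInc_closure {M : Set (II × II)} (h : StrM false M) : WkInc (closure M) := by
  intro p hp q hq hlt
  by_contra hcon
  push_neg at hcon
  have hlt' : (p.1:ℝ) < q.1 := Subtype.coe_lt_coe.2 hlt
  have hcon' : (q.2:ℝ) < p.2 := Subtype.coe_lt_coe.2 hcon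
  set δ := min ((q.1:ℝ) - p.1) ((p.2:ℝ) - q.2) / 3 with hδ
  have hδpos : 0 < δ := div_pos (lt_min (by linarith) (by linarith)) (by norm_num)
  have hδa : 3*δ ≤ (q.1:ℝ) - p.1 := by
    have := min_le_left ((q.1:ℝ) - (p.1:ℝ)) ((p.2:ℝ) - (q.2:ℝ))
    rw [hδ]; linarith
  have hδb : 3*δ ≤ (p.2:ℝ) - q.2 := by
    have := min_le_right ((q.1:ℝ) - (p.1:ℝ)) ((p.2:ℝ) - (q.2:ℝ))
    rw [hδ]; linarith
  obtain ⟨p', hp'M, hp'd⟩ := Metric.mem_closure_iff.1 hp δ hδpos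
  obtain ⟨q', hq'M, hq'd⟩ := Metric.mem_closure_iff.1 hq δ hδpos
  obtain ⟨hp1, hp2⟩ := prod_dist_coord hp'd
  obtain ⟨hq1, hq2⟩ := prod_dist_coord hq'd
  rw [abs_lt] at hp1 hp2 hq1 hq2
  have h1 : (p'.1:ℝ) < q'.1 := by linarith [hp1.1, hp1.2, hq1.1, hq1.2]
  have h2 : (q'.2:ℝ) < p'.2 := by linarith [hp2.1, hp2.2, hq2.1, hq2.2]
  have hne : p' ≠ q' := fun he => lt_irrefl ((q'.1:ℝ)) (by rw [he] at h1; exact h1)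
  have hres := (h p' hp'M q' hq'M hne).2.2 (Subtype.coe_lt_coe.1 h1)
  simp only [Bool.false_eq_true, if_false] at hres
  exact absurd h2 (not_lt_of_gt (Subtype.coe_lt_coe.2 hres))

theorem multiX_countable {R : Set (II × II)} (hR : WkAnti R ∨ WkInc R) :
    {x : II | ∃ p ∈ R, ∃ q ∈ R, p.1 = x ∧ q.1 = x ∧ p.2 ≠ q.2}.Countable := by
  classical
  have hwit : ∀ x ∈ {x : II | ∃ p ∈ R, ∃ q ∈ R, p.1 = x ∧ q.1 = x ∧ p.2 ≠ q.2},
      ∃ pq : (II × II) × (II × II), ∃ t : ℚ, pq.1 ∈ R ∧ pq.2 ∈ R ∧ pq.1.1 = x ∧ pq.2.1 = x ∧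
        (pq.1.2:ℝ) < (t:ℝ) ∧ (t:ℝ) < (pq.2.2:ℝ) := by
    rintro x ⟨p, hp, q, hq, hpx, hqx, hne⟩
    rcases lt_or_gt_of_ne (fun h : p.2 = q.2 => hne h) with h | h
    · obtain ⟨t, ht1, ht2⟩ := exists_rat_btwn (Subtype.coe_lt_coe.2 h)
      exact ⟨(p, q), t, hp, hq, hpx, hqx, ht1, ht2⟩
    · obtain ⟨t, ht1, ht2⟩ := exists_rat_btwn (Subtype.coe_lt_coe.2 h)
      exact ⟨(q, p), t, hq, hp, hqx, hpx, ht1, ht2⟩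
  choose! pq tw h1 h2 h3 h4 h5 using hwit
  apply countable_of_injOn_rat tw
  intro x hx x' hx' ht
  by_contra hne
  have key : ∀ a b2, a ∈ {x : II | ∃ p ∈ R, ∃ q ∈ R, p.1 = x ∧ q.1 = x ∧ p.2 ≠ q.2} →
      b2 ∈ {x : II | ∃ p ∈ R, ∃ q ∈ R, p.1 = x ∧ q.1 = x ∧ p.2 ≠ q.2} →
      a < b2 → tw a = tw b2 → False := by
    intro a b2 ha hb hab htw
    have l1a := (h5 a ha).1
    have l2a := (h5 a ha).2
    have l1b := (h5 b2 hb).1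
    have l2b := (h5 b2 hb).2
    rw [htw] at l1a l2a
    rcases hR with hA | hI
    · -- weakly decreasing : pair ((a,·low),(b2,·high)) violates
      have := hA (pq a).1 (h1 a ha) (pq b2).2 (h2 b2 hb)
        (by rw [h3 a ha, h4 b2 hb]; exact hab)
      have hcc := Subtype.coe_le_coe.2 this
      linarith
    · have := hI (pq a).2 (h2 a ha) (pq b2).1 (h1 b2 hb)
        (by rw [h4 a ha, h3 b2 hb]; exact hab)
      have hcc := Subtype.coe_le_coe.2 this
      linarith
  rcases lt_or_gt_of_ne (fun h : x = x' => hne h) with h | h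
  · exact key x x' hx hx' h ht
  · exact key x' x hx' hx h ht.symm

theorem wkAnti_rinv {R : Set (II × II)} (h : WkAnti R) : WkAnti (rinv R) := by
  intro p hp q hq hlt
  rcases lt_trichotomy q.2 p.2 with hh | hh | hh
  · exact le_of_lt hh
  · exact le_of_eq hh
  · exact absurd (h _ hp _ hq hh) (not_le_of_gt hlt)

theorem wkInc_rinv {R : Set (II × II)} (h : WkInc R) : WkInc (rinv R) := by
  intro p hp q hq hlt
  rcases lt_trichotomy p.2 q.2 with hh | hh | hh
  · exact le_of_lt hh
  · exact le_of_eq hh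
  · exact absurd (h _ hq _ hp hh) (not_le_of_gt hlt)

theorem multiY_countable {R : Set (II × II)} (hR : WkAnti R ∨ WkInc R) :
    {y : II | ∃ p ∈ R, ∃ q ∈ R, p.2 = y ∧ q.2 = y ∧ p.1 ≠ q.1}.Countable := by
  have hR' : WkAnti (rinv R) ∨ WkInc (rinv R) := by
    rcases hR with h | h
    · exact Or.inl (wkAnti_rinv h)
    · exact Or.inr (wkInc_rinv h)
  have := multiX_countable hR'
  apply Set.Countable.mono _ this
  rintro y ⟨p, hp, q, hq, hpy, hqy, hne⟩
  exact ⟨(p.2, p.1), hp, (q.2, q.1), hq, hpy, hqy, hne⟩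

theorem diff_sP_countable {M R : Set (II × II)} (hMR : M ⊆ R) (hR : WkAnti R ∨ WkInc R)
    (hM : ∀ p ∈ M, ∀ q ∈ M, p ≠ q → p.1 ≠ q.1 ∧ p.2 ≠ q.2) :
    (M \ sP R).Countable := by
  have hsub : M \ sP R ⊆
      (M ∩ {p : II × II | p.1 ∈ {x : II | ∃ p ∈ R, ∃ q ∈ R, p.1 = x ∧ q.1 = x ∧ p.2 ≠ q.2}}) ∪
      (M ∩ {p : II × II | p.2 ∈ {y : II | ∃ p ∈ R, ∃ q ∈ R, p.2 = y ∧ q.2 = y ∧ p.1 ≠ q.1}}) := by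
    rintro p ⟨hpM, hpn⟩
    have hpR : p ∈ R := hMR hpM
    have : ¬ (∀ q ∈ R, (q.1 = p.1 ∨ q.2 = p.2) → q = p) := fun hc => hpn ⟨hpR, hc⟩
    push_neg at this
    obtain ⟨q, hqR, hq1, hq2⟩ := this
    rcases hq1 with he | he
    · left
      have hne2 : q.2 ≠ p.2 := fun h2 => hq2 (Prod.ext he h2)
      exact ⟨hpM, q, hqR, p, hpR, he, rfl, hne2⟩
    · right
      have hne1 : q.1 ≠ p.1 := fun h1 => hq2 (Prod.ext h1 he)
      exact ⟨hpM, q, hqR, p, hpR, he, rfl, hne1⟩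
  apply Set.Countable.mono hsub
  apply Set.Countable.union
  · apply Set.countable_of_injective_of_countable_image
      (f := (Prod.fst : II × II → II))
    · intro p hp q hq he
      by_contra hne
      exact (hM p hp.1 q hq.1 hne).1 he
    · apply Set.Countable.mono _ (multiX_countable hR)
      rintro x ⟨p, ⟨hpM, hpx⟩, rfl⟩
      exact hpx
  · apply Set.countable_of_injective_of_countable_image
      (f := (Prod.snd : II × II → II))
    · intro p hp q hq he
      by_contra hne
      exact (hM p hp.1 q hq.1 hne).2 he
    · apply Set.Countable.mono _ (multiY_countable hR)
      rintro y ⟨p, ⟨hpM, hpy⟩, rfl⟩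
      exact hpy

/-! ### Edges, walks, and the transfinite Kruskal forest -/

/-- An edge: a member of the strict part of one of the relations. -/
def Edge : Type := {e : Fam × (II × II) // e.2 ∈ sP e.1.1}

abbrev O1 : Type := (Cardinal.aleph 1).ord.ToType

def Edge.g (e : Edge) : Fam := e.1.1
def Edge.pa (e : Edge) : II := e.1.2.1
def Edge.pb (e : Edge) : II := e.1.2.2

/-- A step in a walk: an edge together with a direction (`true` = backwards). -/
def Step : Type := Edge × Bool

def src (s : Step) : II := if s.2 then s.1.pb else s.1.pa
def dst (s : Step) : II := if s.2 then s.1.pa else s.1.pb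

def IsWalk : List Step → II → II → Prop
  | [], a, b => a = b
  | s :: w, a, b => src s = a ∧ IsWalk w (dst s) b

def wordOf (w : List Step) : List Letter := w.map (fun s => (s.1.g, s.2))

noncomputable def wPar (w : List Step) : Bool := wordPar (wordOf w)

theorem wPar_nil : wPar ([] : List Step) = false := rfl

theorem wPar_cons (s : Step) (w : List Step) :
    wPar (s :: w) = xor (par s.1.g) (wPar w) := rfl

theorem wordPar_append (u v : List Letter) :
    wordPar (u ++ v) = xor (wordPar u) (wordPar v) := by
  induction u with
  | nil => simp [wordPar]
  | cons l u ih =>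
      show wordPar (l :: (u ++ v)) = _
      rw [wordPar, ih, wordPar, Bool.xor_assoc]

theorem wPar_append (u v : List Step) : wPar (u ++ v) = xor (wPar u) (wPar v) := by
  unfold wPar wordOf
  rw [List.map_append, wordPar_append]

def revStep (s : Step) : Step := (s.1, !s.2)

def revWalk (w : List Step) : List Step := (w.map revStep).reverse

theorem src_revStep (s : Step) : src (revStep s) = dst s := by
  cases s with
  | mk e d => cases d <;> rfl

theorem dst_revStep (s : Step) : dst (revStep s) = src s := by
  cases s with
  | mk e d => cases d <;> rfl

theorem walk_append {u v : List Step} {a b c : II}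
    (hu : IsWalk u a b) (hv : IsWalk v b c) : IsWalk (u ++ v) a c := by
  induction u generalizing a with
  | nil => rw [show a = b from hu]; exact hv
  | cons s u ih => exact ⟨hu.1, ih hu.2⟩

theorem walk_append_iff {u v : List Step} {a c : II} :
    IsWalk (u ++ v) a c ↔ ∃ b, IsWalk u a b ∧ IsWalk v b c := by
  constructor
  · intro h
    induction u generalizing a with
    | nil => exact ⟨a, rfl, h⟩
    | cons s u ih =>
        obtain ⟨b, h1, h2⟩ := ih h.2
        exact ⟨b, ⟨h.1, h1⟩, h2⟩
  · rintro ⟨b, h1, h2⟩; exact walk_append h1 h2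

theorem walk_rev {w : List Step} {a b : II} (h : IsWalk w a b) :
    IsWalk (revWalk w) b a := by
  induction w generalizing a with
  | nil => exact h.symm
  | cons s w ih =>
      have : revWalk (s :: w) = revWalk w ++ [revStep s] := by
        unfold revWalk; simp
      rw [this]
      apply walk_append (ih h.2)
      exact ⟨src_revStep s, (dst_revStep s).trans h.1⟩

theorem wPar_single (s : Step) : wPar [s] = par s.1.g := by
  show xor (par s.1.g) false = _
  simp

theorem wPar_revWalk (w : List Step) : wPar (revWalk w) = wPar w := by
  induction w with
  | nil => rfl
  | cons s w ih =>
      have h1 : revWalk (s :: w) = revWalk w ++ [revStep s] := by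
        unfold revWalk; simp
      rw [h1, wPar_append, ih, wPar_cons, wPar_nil, wPar_cons]
      show (wPar w ^^ (par s.1.g ^^ false)) = (par s.1.g ^^ wPar w)
      simp [Bool.xor_comm]

theorem walk_wordRel {w : List Step} {a b : II} (h : IsWalk w a b) :
    (a, b) ∈ wordRel (wordOf w) := by
  induction w generalizing a with
  | nil => exact h
  | cons s w ih =>
      refine ⟨dst s, ?_, ih h.2⟩
      rw [← h.1]
      show (src s, dst s) ∈ letterRel (s.1.g, s.2)
      unfold letterRel src dst
      cases hd : s.2
      · simp only [Bool.false_eq_true, if_false]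
        exact s.1.2
      · simp only [if_true]
        exact s.1.2

theorem wPar_wordOf (w : List Step) : wordPar (wordOf w) = wPar w := rfl

/-! the edge well-order -/

def elt (j : Fam → O1) : Edge → Edge → Prop := fun e e' =>
  Prod.Lex ((· < ·) : O1 → O1 → Prop) (WellOrderingRel : Edge → Edge → Prop)
    (j e.g, e) (j e'.g, e')

theorem elt_iff (j : Fam → O1) (e e' : Edge) :
    elt j e e' ↔ j e.g < j e'.g ∨ (j e.g = j e'.g ∧ WellOrderingRel e e') :=
  Prod.lex_iff

def ele (j : Fam → O1) (e e' : Edge) : Prop := elt j e e' ∨ e = e'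

theorem elt_wf (j : Fam → O1) : WellFounded (elt j) :=
  InvImage.wf (fun e : Edge => ((j e.g, e) : O1 × Edge)) (WellFounded.prod_lex wellFounded_lt
    (IsWellFounded.wf (r := (WellOrderingRel : Edge → Edge → Prop))))

theorem elt_total (j : Fam → O1) (e e' : Edge) : elt j e e' ∨ e = e' ∨ elt j e' e := by
  rcases lt_trichotomy (j e.g) (j e'.g) with h | h | h
  · exact Or.inl ((elt_iff j e e').2 (Or.inl h))
  · rcases trichotomous_of (WellOrderingRel : Edge → Edge → Prop) e e' with h2 | h2 | h2
    · exact Or.inl ((elt_iff j e e').2 (Or.inr ⟨h, h2⟩))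
    · exact Or.inr (Or.inl h2)
    · exact Or.inr (Or.inr ((elt_iff j e' e).2 (Or.inr ⟨h.symm, h2⟩)))
  · exact Or.inr (Or.inr ((elt_iff j e' e).2 (Or.inl h)))

theorem elt_trans (j : Fam → O1) {e₁ e₂ e₃ : Edge}
    (h1 : elt j e₁ e₂) (h2 : elt j e₂ e₃) : elt j e₁ e₃ := by
  rw [elt_iff] at h1 h2 ⊢
  rcases h1 with ha | ⟨ha1, ha2⟩ <;> rcases h2 with hb | ⟨hb1, hb2⟩
  · exact Or.inl (lt_trans ha hb)
  · exact Or.inl (hb1 ▸ ha)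
  · exact Or.inl (ha1 ▸ hb)
  · exact Or.inr ⟨ha1.trans hb1,
      IsTrans.trans (r := (WellOrderingRel : Edge → Edge → Prop)) _ _ _ ha2 hb2⟩

theorem elt_irrefl (j : Fam → O1) (e : Edge) : ¬ elt j e e := by
  intro h
  rw [elt_iff] at h
  rcases h with h1 | ⟨_, h2⟩
  · exact lt_irrefl _ h1
  · exact irrefl_of (WellOrderingRel : Edge → Edge → Prop) e h2

theorem ele_trans (j : Fam → O1) {e₁ e₂ e₃ : Edge}
    (h1 : ele j e₁ e₂) (h2 : ele j e₂ e₃) : ele j e₁ e₃ := by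
  rcases h1 with h1 | rfl
  · rcases h2 with h2 | rfl
    · exact Or.inl (elt_trans j h1 h2)
    · exact Or.inl h1
  · exact h2

theorem exists_max_edge (j : Fam → O1) (l : List Step) (h : l ≠ []) :
    ∃ m ∈ l, ∀ x ∈ l, ele j x.1 m.1 := by
  induction l with
  | nil => exact absurd rfl h
  | cons s t ih =>
      rcases eq_or_ne t [] with rfl | ht
      · exact ⟨s, List.mem_cons_self, by
          intro x hx
          rcases List.mem_cons.1 hx with rfl | hx
          · exact Or.inr rfl
          · exact absurd hx List.not_mem_nil⟩
      · obtain ⟨m, hm, hmax⟩ := ih ht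
        rcases elt_total j s.1 m.1 with hc | hc | hc
        · exact ⟨m, List.mem_cons_of_mem s hm, by
            intro x hx
            rcases List.mem_cons.1 hx with rfl | hx
            · exact Or.inl hc
            · exact hmax x hx⟩
        · exact ⟨m, List.mem_cons_of_mem s hm, by
            intro x hx
            rcases List.mem_cons.1 hx with rfl | hx
            · exact Or.inr hc
            · exact hmax x hx⟩
        · exact ⟨s, List.mem_cons_self, by
            intro x hx
            rcases List.mem_cons.1 hx with rfl | hx
            · exact Or.inr rfl
            · exact ele_trans j (hmax x hx) (Or.inl hc)⟩

theorem first_occ {α : Type*} (P : α → Prop) (l : List α) (h : ∃ x ∈ l, P x) :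
    ∃ l₁ x l₂, l = l₁ ++ x :: l₂ ∧ P x ∧ ∀ y ∈ l₁, ¬ P y := by
  classical
  induction l with
  | nil => simp at h
  | cons a t ih =>
      by_cases ha : P a
      · exact ⟨[], a, t, by simp, ha, by simp⟩
      · have : ∃ x ∈ t, P x := by
          obtain ⟨x, hx, hPx⟩ := h
          rcases List.mem_cons.1 hx with rfl | hx
          · exact absurd hPx ha
          · exact ⟨x, hx, hPx⟩
        obtain ⟨l₁, x, l₂, heq, hPx, hnone⟩ := ih this
        refine ⟨a :: l₁, x, l₂, by rw [heq]; rfl, hPx, ?_⟩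
        intro y hy
        rcases List.mem_cons.1 hy with rfl | hy
        · exact ha
        · exact hnone y hy

theorem mem_revWalk {w : List Step} {s : Step} (h : s ∈ revWalk w) : ∃ s' ∈ w, s.1 = s'.1 := by
  unfold revWalk at h
  rw [List.mem_reverse, List.mem_map] at h
  obtain ⟨s', hs', he⟩ := h
  exact ⟨s', hs', by rw [← he]; rfl⟩

/-- The transfinite Kruskal forest: an edge is added iff its endpoints are not yet connected
by smaller added edges. -/
noncomputable def added (j : Fam → O1) : Edge → Prop :=
  WellFounded.fix (elt_wf j) (fun e IH =>
    ¬ ∃ w : List Step, IsWalk w e.pa e.pb ∧ ∀ s ∈ w, ∃ h : elt j s.1 e, IH s.1 h)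

theorem added_iff (j : Fam → O1) (e : Edge) : added j e ↔
    ¬ ∃ w : List Step, IsWalk w e.pa e.pb ∧ ∀ s ∈ w, elt j s.1 e ∧ added j s.1 := by
  unfold added
  rw [WellFounded.fix_eq]
  simp only [exists_prop]

/-- Any closed walk in the forest has even parity. -/
theorem closed_even (j : Fam → O1) (e : Edge) :
    ∀ n : ℕ, ∀ w : List Step, w.length ≤ n →
      (∀ s ∈ w, added j s.1 ∧ ele j s.1 e) → ∀ a, IsWalk w a a → wPar w = false := by
  refine WellFounded.induction (elt_wf j) (C := fun e => ∀ n : ℕ, ∀ w : List Step,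
      w.length ≤ n → (∀ s ∈ w, added j s.1 ∧ ele j s.1 e) →
      ∀ a, IsWalk w a a → wPar w = false) e ?_
  clear e
  intro e IH n
  induction n with
  | zero =>
      intro w hlen _ a _
      have : w = [] := List.length_eq_zero_iff.1 (Nat.le_zero.1 hlen)
      rw [this]; rfl
  | succ n ihn =>
      intro w hlen hgood a hwalk
      by_cases hocc : ∃ s ∈ w, s.1 = e
      · obtain ⟨w₁, s₀, w₂, rfl, hs₀, hw₁free⟩ := first_occ (fun s => s.1 = e) w hocc
        obtain ⟨c, hwalk₁, hwalk₂'⟩ := walk_append_iff.1 hwalk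
        obtain ⟨hsrc₀, hwalk₂⟩ := hwalk₂'
        have hadde : added j e := by
          have := (hgood s₀ (List.mem_append_right _ (List.mem_cons_self))).1
          rwa [hs₀] at this
        have hsmall : ∀ s : Step, s ∈ w₁ ++ s₀ :: w₂ → s.1 ≠ e → elt j s.1 e ∧ added j s.1 := by
          intro s hs hne
          refine ⟨?_, (hgood s hs).1⟩
          rcases (hgood s hs).2 with h | h
          · exact h
          · exact absurd h hne
        by_cases hocc₂ : ∃ s ∈ w₂, s.1 = e
        · obtain ⟨w₃, s₁, w₄, rfl, hs₁, hw₃free⟩ := first_occ (fun s => s.1 = e) w₂ hocc₂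
          obtain ⟨c', hwalk₃, hwalk₄'⟩ := walk_append_iff.1 hwalk₂
          obtain ⟨hsrc₁, hwalk₄⟩ := hwalk₄'
          by_cases hdir : s₁.2 = s₀.2
          · -- same direction crossing: contradiction with `added e`
            exfalso
            have hss : src s₁ = src s₀ := by
              unfold src; rw [hdir, hs₀, hs₁]
            have hw₃ : IsWalk w₃ (dst s₀) (src s₀) := by
              rw [← hss, hsrc₁]; exact hwalk₃
            have hcond : ∀ s ∈ w₃, elt j s.1 e ∧ added j s.1 := by
              intro s hs
              exact hsmall s (List.mem_append_right _ (List.mem_cons_of_mem _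
                (List.mem_append_left _ hs))) (hw₃free s hs)
            apply (added_iff j e).1 hadde
            cases hd0 : s₀.2
            · -- forward : dst s₀ = e.pb, src s₀ = e.pa : reverse w₃
              refine ⟨revWalk w₃, ?_, ?_⟩
              · have : IsWalk (revWalk w₃) (src s₀) (dst s₀) := walk_rev hw₃
                have h1 : src s₀ = e.pa := by unfold src; rw [hd0, hs₀]; rfl
                have h2 : dst s₀ = e.pb := by unfold dst; rw [hd0, hs₀]; rfl
                rwa [h1, h2] at this
              · intro s hs
                obtain ⟨s', hs', he'⟩ := mem_revWalk hs
                rw [he']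
                exact hcond s' hs'
            · refine ⟨w₃, ?_, hcond⟩
              have h1 : src s₀ = e.pb := by unfold src; rw [hd0, hs₀]; rfl
              have h2 : dst s₀ = e.pa := by unfold dst; rw [hd0, hs₀]; rfl
              rwa [h1, h2] at hw₃
          · -- opposite direction: surgery
            have hflip : s₁.2 = !s₀.2 := by
              cases h0 : s₀.2 <;> cases h1 : s₁.2
              · exact absurd (h1.trans h0.symm) hdir
              · rfl
              · rfl
              · exact absurd (h1.trans h0.symm) hdir
            have hss : src s₁ = dst s₀ := by
              unfold src dst
              rw [hflip, hs₀, hs₁]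
              cases h0 : s₀.2 <;> rfl
            have hdd : dst s₁ = src s₀ := by
              unfold src dst
              rw [hflip, hs₀, hs₁]
              cases h0 : s₀.2 <;> rfl
            -- w₃ is a closed walk
            have hw₃closed : IsWalk w₃ (dst s₀) (dst s₀) := by
              have := hwalk₃
              rwa [← hsrc₁, hss] at this
            have hpar₃ : wPar w₃ = false := by
              rcases eq_or_ne w₃ [] with rfl | hne₃
              · rfl
              · obtain ⟨m, hm, hmax⟩ := exists_max_edge j w₃ hne₃
                have hmlt : elt j m.1 e :=
                  (hsmall m (List.mem_append_right _ (List.mem_cons_of_mem _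
                    (List.mem_append_left _ hm))) (hw₃free m hm)).1
                exact IH m.1 hmlt w₃.length w₃ le_rfl
                  (fun s hs => ⟨(hgood s (List.mem_append_right _ (List.mem_cons_of_mem _
                    (List.mem_append_left _ hs)))).1, hmax s hs⟩) (dst s₀) hw₃closed
            -- surgery walk
            have hwalk' : IsWalk (w₁ ++ w₄) a a := by
              apply walk_append hwalk₁
              rw [← hsrc₀, ← hdd]
              exact hwalk₄
            have hlen' : (w₁ ++ w₄).length ≤ n := by
              simp only [List.length_append, List.length_cons] at hlen ⊢
              omega
            have hpar' : wPar (w₁ ++ w₄) = false :=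
              ihn (w₁ ++ w₄) hlen'
                (fun s hs => hgood s (by
                  rcases List.mem_append.1 hs with h | h
                  · exact List.mem_append_left _ h
                  · exact List.mem_append_right _ (List.mem_cons_of_mem _
                      (List.mem_append_right _ (List.mem_cons_of_mem _ h))))) a hwalk'
            -- compute total parity
            have hpp : par s₁.1.g = par s₀.1.g := by rw [hs₀, hs₁]
            rw [wPar_append] at hpar'
            rw [wPar_append, wPar_cons, wPar_append, wPar_cons, hpar₃, hpp,
              Bool.false_xor, ← Bool.xor_assoc (par s₀.1.g), Bool.xor_self, Bool.false_xor]
            exact hpar'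
        · -- single crossing: contradiction with `added e`
          exfalso
          have hv : IsWalk (revWalk w₁ ++ revWalk w₂) (src s₀) (dst s₀) := by
            rw [hsrc₀]
            exact walk_append (walk_rev hwalk₁) (walk_rev hwalk₂)
          have hcond : ∀ s ∈ revWalk w₁ ++ revWalk w₂, elt j s.1 e ∧ added j s.1 := by
            intro s hs
            rcases List.mem_append.1 hs with h | h
            · obtain ⟨s', hs', he'⟩ := mem_revWalk h
              rw [he']
              exact hsmall s' (List.mem_append_left _ hs') (hw₁free s' hs')
            · obtain ⟨s', hs', he'⟩ := mem_revWalk h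
              rw [he']
              exact hsmall s' (List.mem_append_right _ (List.mem_cons_of_mem _ hs'))
                (fun hh => hocc₂ ⟨s', hs', hh⟩)
          apply (added_iff j e).1 hadde
          cases hd0 : s₀.2
          · refine ⟨revWalk w₁ ++ revWalk w₂, ?_, hcond⟩
            have h1 : src s₀ = e.pa := by unfold src; rw [hd0, hs₀]; rfl
            have h2 : dst s₀ = e.pb := by unfold dst; rw [hd0, hs₀]; rfl
            rwa [h1, h2] at hv
          · refine ⟨revWalk (revWalk w₁ ++ revWalk w₂), ?_, ?_⟩
            · have := walk_rev hv
              have h1 : src s₀ = e.pb := by unfold src; rw [hd0, hs₀]; rfl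
              have h2 : dst s₀ = e.pa := by unfold dst; rw [hd0, hs₀]; rfl
              rwa [h1, h2] at this
            · intro s hs
              obtain ⟨s', hs', he'⟩ := mem_revWalk hs
              rw [he']
              exact hcond s' hs'
      · -- no occurrence of the top edge
        rcases eq_or_ne w [] with rfl | hne
        · rfl
        obtain ⟨m, hm, hmax⟩ := exists_max_edge j w hne
        have hmlt : elt j m.1 e := by
          rcases (hgood m hm).2 with h | h
          · exact h
          · exact absurd h (fun hh => hocc ⟨m, hm, hh⟩)
        exact IH m.1 hmlt w.length w le_rfl
          (fun s hs => ⟨(hgood s hs).1, hmax s hs⟩) a hwalk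

def Conn (j : Fam → O1) (x y : II) : Prop :=
  ∃ w : List Step, IsWalk w x y ∧ ∀ s ∈ w, added j s.1

theorem conn_refl (j : Fam → O1) (x : II) : Conn j x x :=
  ⟨[], rfl, by intro s hs; exact absurd hs List.not_mem_nil⟩

theorem conn_symm {j : Fam → O1} {x y : II} (h : Conn j x y) : Conn j y x := by
  obtain ⟨w, hw, hg⟩ := h
  refine ⟨revWalk w, walk_rev hw, ?_⟩
  intro s hs
  obtain ⟨s', hs', he⟩ := mem_revWalk hs
  rw [he]; exact hg s' hs'

theorem conn_trans {j : Fam → O1} {x y z : II} (h1 : Conn j x y) (h2 : Conn j y z) :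
    Conn j x z := by
  obtain ⟨w, hw, hg⟩ := h1
  obtain ⟨w', hw', hg'⟩ := h2
  refine ⟨w ++ w', walk_append hw hw', ?_⟩
  intro s hs
  rcases List.mem_append.1 hs with h | h
  · exact hg s h
  · exact hg' s h

noncomputable def connSetoid (j : Fam → O1) : Setoid II :=
  ⟨Conn j, conn_refl j, conn_symm, conn_trans⟩

noncomputable def rep (j : Fam → O1) (x : II) : II :=
  (Quotient.mk (connSetoid j) x).out

theorem conn_rep (j : Fam → O1) (x : II) : Conn j (rep j x) x :=
  Quotient.exact (Quotient.out_eq (Quotient.mk (connSetoid j) x))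

theorem rep_eq_of_conn {j : Fam → O1} {x y : II} (h : Conn j x y) : rep j x = rep j y := by
  unfold rep
  rw [Quotient.sound (a := x) (b := y) h]

noncomputable def phi (j : Fam → O1) (x : II) : Bool :=
  if ∃ w : List Step, IsWalk w (rep j x) x ∧ (∀ s ∈ w, added j s.1) ∧ wPar w = true
  then true else false

theorem parity_unique (j : Fam → O1) {w w' : List Step} {x y : II}
    (h : IsWalk w x y) (hg : ∀ s ∈ w, added j s.1)
    (h' : IsWalk w' x y) (hg' : ∀ s ∈ w', added j s.1) : wPar w = wPar w' := by
  have hclosed : IsWalk (w ++ revWalk w') x x := walk_append h (walk_rev h')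
  have hcond : ∀ s ∈ w ++ revWalk w', added j s.1 := by
    intro s hs
    rcases List.mem_append.1 hs with hh | hh
    · exact hg s hh
    · obtain ⟨s', hs', he⟩ := mem_revWalk hh
      rw [he]; exact hg' s' hs'
  have hkey : wPar (w ++ revWalk w') = false := by
    rcases eq_or_ne (w ++ revWalk w') [] with hnil | hne
    · rw [hnil]; rfl
    · obtain ⟨m, hm, hmax⟩ := exists_max_edge j _ hne
      exact closed_even j m.1 (w ++ revWalk w').length _ le_rfl
        (fun s hs => ⟨hcond s hs, hmax s hs⟩) x hclosed
  rw [wPar_append, wPar_revWalk] at hkey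
  cases ha : wPar w <;> cases hb : wPar w' <;> rw [ha, hb] at hkey <;>
    first | rfl | simp at hkey

theorem exists_phi_walk (j : Fam → O1) (x : II) :
    ∃ u, IsWalk u (rep j x) x ∧ (∀ s ∈ u, added j s.1) ∧ wPar u = phi j x := by
  unfold phi
  by_cases hc : ∃ u, IsWalk u (rep j x) x ∧ (∀ s ∈ u, added j s.1) ∧ wPar u = true
  · rw [if_pos hc]; exact hc
  · rw [if_neg hc]
    obtain ⟨u, hu, hug⟩ := conn_rep j x
    refine ⟨u, hu, hug, ?_⟩
    cases hpu : wPar u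
    · rfl
    · exact absurd ⟨u, hu, hug, hpu⟩ hc

theorem phi_spec (j : Fam → O1) {w : List Step} {x y : II} (h : IsWalk w x y)
    (hg : ∀ s ∈ w, added j s.1) : xor (phi j x) (phi j y) = wPar w := by
  have hconn : Conn j x y := ⟨w, h, hg⟩
  have hrep : rep j x = rep j y := rep_eq_of_conn hconn
  obtain ⟨u, hu1, hu2, hu3⟩ := exists_phi_walk j x
  obtain ⟨v, hv1, hv2, hv3⟩ := exists_phi_walk j y
  have h1 : IsWalk (u ++ w) (rep j x) y := walk_append hu1 h
  have h2 : IsWalk v (rep j x) y := by rw [hrep]; exact hv1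
  have hpar := parity_unique j h1 (by
    intro s hs
    rcases List.mem_append.1 hs with hh | hh
    · exact hu2 s hh
    · exact hg s hh) h2 hv2
  rw [wPar_append, hu3, hv3] at hpar
  rw [← hpar, ← Bool.xor_assoc, Bool.xor_self, Bool.false_xor]

theorem lists_countable {α : Type*} {S : Set α} (hS : S.Countable) :
    {l : List α | ∀ x ∈ l, x ∈ S}.Countable := by
  haveI := hS.to_subtype
  have hsub : {l : List α | ∀ x ∈ l, x ∈ S} ⊆ Set.range (List.map (Subtype.val : ↥S → α)) := by
    intro l hl
    induction l with
    | nil => exact ⟨[], rfl⟩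
    | cons a t ih =>
        obtain ⟨t', ht'⟩ := ih (fun x hx => hl x (List.mem_cons_of_mem a hx))
        exact ⟨⟨a, hl a (List.mem_cons_self)⟩ :: t', by rw [List.map_cons, ht']⟩
  exact Set.Countable.mono hsub (Set.countable_range _)

theorem viol_countable (j : Fam → O1) (hseg : ∀ g : Fam, {h : Fam | j h ≤ j g}.Countable)
    (g : Fam) :
    {a : II | ∃ b : II, (a, b) ∈ sP g.1 ∧ xor (phi j a) (phi j b) ≠ par g}.Countable := by
  classical
  have hwords : ∀ a ∈ {a : II | ∃ b : II, (a, b) ∈ sP g.1 ∧ xor (phi j a) (phi j b) ≠ par g},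
      ∃ u : List Letter, (a, a) ∈ wordRel u ∧ wordPar u = true ∧
      ∀ l ∈ u, l.1 ∈ {h : Fam | j h ≤ j g} := by
    rintro a ⟨b, hmem, hmis⟩
    set e : Edge := ⟨(g, (a, b)), hmem⟩ with he
    by_cases hadd : added j e
    · exfalso
      have hwalk : IsWalk [((e, false) : Step)] a b := ⟨rfl, rfl⟩
      have hps := phi_spec j hwalk (by
        intro s hs
        replace hs : s = (e, false) := List.mem_singleton.1 hs
        rw [hs]; exact hadd)
      have hps := hps.trans (wPar_single _)
      exact hmis hps
    · rw [added_iff, not_not] at hadd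
      obtain ⟨v, hv, hvc⟩ := hadd
      have hvadd : ∀ s ∈ v, added j s.1 := fun s hs => (hvc s hs).2
      have hpv : wPar v = xor (phi j a) (phi j b) := (phi_spec j hv hvadd).symm
      refine ⟨(g, false) :: wordOf (revWalk v), ⟨b, ?_, walk_wordRel (walk_rev hv)⟩, ?_, ?_⟩
      · show (a, b) ∈ letterRel (g, false)
        unfold letterRel
        simp only [Bool.false_eq_true, if_false]
        exact hmem
      · show xor (letterPar (g, false)) (wordPar (wordOf (revWalk v))) = true
        rw [show letterPar (g, false) = par g from rfl, wPar_wordOf, wPar_revWalk, hpv]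
        cases h1 : xor (phi j a) (phi j b) <;> cases h3 : par g <;>
          first
          | rfl
          | exact absurd (h1.trans h3.symm) hmis
      · rintro l hl
        rcases List.mem_cons.1 hl with rfl | hl
        · show j g ≤ j g
          exact le_refl _
        · rw [wordOf, List.mem_map] at hl
          obtain ⟨s, hs, rfl⟩ := hl
          obtain ⟨s', hs', he'⟩ := mem_revWalk hs
          have helt := (hvc s' hs').1
          rw [elt_iff] at helt
          show j ((s.1.g, s.2) : Letter).1 ≤ j g
          rw [show ((s.1.g, s.2) : Letter).1 = s'.1.g by rw [← he']]
          rcases helt with h | ⟨h, _⟩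
          · exact le_of_lt h
          · exact le_of_eq h
  choose! u hu1 hu2 hu3 using hwords
  apply Set.countable_of_injective_of_countable_image (f := u)
  · intro a ha a' ha' heq
    have d1 := hu1 a ha
    have d2 := hu1 a' ha'
    rw [heq] at d1
    have hstr : StrM true (wordRel (u a')) := by
      rw [← hu2 a' ha']; exact strm_word (u a')
    exact strm_fix hstr d1 d2
  · have himg : u '' {a : II | ∃ b : II, (a, b) ∈ sP g.1 ∧ xor (phi j a) (phi j b) ≠ par g} ⊆
        {l : List Letter | ∀ x ∈ l, x ∈ {x : Letter | x.1 ∈ {h : Fam | j h ≤ j g}}} := by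
      rintro l ⟨a, ha, rfl⟩
      exact fun x hx => hu3 a ha x hx
    apply Set.Countable.mono himg
    have hSL : {x : Letter | x.1 ∈ {h : Fam | j h ≤ j g}}.Countable := by
      have heq : {x : Letter | x.1 ∈ {h : Fam | j h ≤ j g}} =
          ({h : Fam | j h ≤ j g} ×ˢ (Set.univ : Set Bool)) := by
        ext l
        simp [Set.mem_prod]
      rw [heq]
      exact (hseg g).prod Set.countable_univ
    exact lists_countable hSL

theorem mk_fam_le : Cardinal.mk Fam ≤ Cardinal.continuum := by
  obtain ⟨b, hbc, hbne, hbasis⟩ := TopologicalSpace.exists_countable_basis (II × II)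
  set F : Fam → Set ↥b := fun g => {u : ↥b | (u : Set (II × II)) ∩ g.1 = ∅} with hF
  have hinj : Function.Injective F := by
    have key : ∀ g₁ g₂ : Fam, F g₁ = F g₂ → g₁.1 ⊆ g₂.1 := by
      intro g₁ g₂ hee x hx
      by_contra hx'
      obtain ⟨u, hub, hxu, husub⟩ := hbasis.exists_subset_of_mem_open hx'
        (g₂.2.1.isOpen_compl)
      have h1 : (⟨u, hub⟩ : ↥b) ∈ F g₂ := by
        show u ∩ g₂.1 = ∅
        rw [Set.eq_empty_iff_forall_notMem]
        intro y hy
        exact husub hy.1 hy.2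
      rw [← hee] at h1
      have h2 : x ∈ u ∩ g₁.1 := ⟨hxu, hx⟩
      rw [show u ∩ g₁.1 = ∅ from h1] at h2
      exact h2
    intro g g' he
    exact Subtype.ext (Set.Subset.antisymm (key g g' he) (key g' g he.symm))
  calc Cardinal.mk Fam ≤ Cardinal.mk (Set ↥b) := Cardinal.mk_le_of_injective hinj
    _ = 2 ^ Cardinal.mk ↥b := Cardinal.mk_set
    _ ≤ 2 ^ Cardinal.aleph0 := by
        apply Cardinal.power_le_power_left two_ne_zero
        haveI := hbc.to_subtype
        exact Cardinal.mk_le_aleph0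
    _ = Cardinal.continuum := Cardinal.two_power_aleph0

theorem exists_goodColoring.{u} (hch : (Cardinal.aleph 1 : Cardinal.{u}) = Cardinal.continuum) :
    ∃ φ : II → Bool, GoodColoring φ := by
  classical
  have hch0 : (Cardinal.aleph 1 : Cardinal.{0}) = Cardinal.continuum := by
    apply Cardinal.lift_injective.{u, 0}
    rw [Cardinal.lift_aleph, Cardinal.lift_continuum, Ordinal.lift_one]
    exact hch
  have hcard : Cardinal.mk Fam ≤ Cardinal.mk O1 := by
    rw [Cardinal.mk_ord_toType, hch0]
    exact mk_fam_le
  obtain ⟨j⟩ := (Cardinal.le_def Fam O1).1 hcard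
  have hseg : ∀ g : Fam, {h : Fam | (⇑j : Fam → O1) h ≤ j g}.Countable := by
    intro g
    have h2 : (Set.Iio (j g)).Countable :=
      (Cardinal.countable_iff_lt_aleph_one _).2 (Cardinal.mk_Iio_ord_toType (j g))
    have h3 : (Set.Iic (j g)).Countable := by
      have heq : Set.Iic (j g) = Set.Iio (j g) ∪ {j g} := by
        ext w
        simp [le_iff_lt_or_eq, Set.mem_Iio, Set.mem_Iic]
      rw [heq]
      exact h2.union (Set.countable_singleton _)
    exact h3.preimage j.injective
  refine ⟨phi (⇑j), ?_, ?_⟩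
  · -- monochromatic strictly decreasing matchings are countable
    intro M hM hmono
    by_cases htriv : ∀ p ∈ M, ∀ q ∈ M, p = q
    · exact Set.Subsingleton.countable (fun p hp q hq => htriv p hp q hq)
    · push_neg at htriv
      set g : Fam := ⟨closure M, isClosed_closure, Or.inl (wkAnti_closure hM)⟩ with hg
      have hpar : par g = true := if_pos (wkAnti_closure hM)
      rw [← Set.diff_union_inter M (sP (closure M))]
      apply Set.Countable.union
      · exact diff_sP_countable subset_closure (Or.inl (wkAnti_closure hM))
          (fun p hp q hq hne => ⟨(hM p hp q hq hne).1, (hM p hp q hq hne).2.1⟩)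
      · apply Set.countable_of_injective_of_countable_image
          (f := (Prod.fst : II × II → II))
        · intro p hp q hq he
          by_contra hne
          exact (hM p hp.1 q hq.1 hne).1 he
        · apply Set.Countable.mono _ (viol_countable (⇑j) hseg g)
          rintro x ⟨p, ⟨hpM, hpsP⟩, rfl⟩
          refine ⟨p.2, hpsP, ?_⟩
          rw [hpar, hmono p hpM, Bool.xor_self]
          exact Bool.false_ne_true
  · -- bichromatic strictly increasing matchings are countable
    intro M hM hbi
    by_cases htriv : ∀ p ∈ M, ∀ q ∈ M, p = q
    · exact Set.Subsingleton.countable (fun p hp q hq => htriv p hp q hq)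
    · push_neg at htriv
      obtain ⟨p0, hp0, q0, hq0, hpq0⟩ := htriv
      have hnotanti : ¬ WkAnti (closure M) := by
        intro hA
        obtain ⟨h1, h2, h3⟩ := hM p0 hp0 q0 hq0 hpq0
        rcases lt_or_gt_of_ne h1 with hlt | hlt
        · have hd := h3 hlt
          simp only [Bool.false_eq_true, if_false] at hd
          exact absurd (hA p0 (subset_closure hp0) q0 (subset_closure hq0) hlt)
            (not_le_of_gt hd)
        · obtain ⟨h1', h2', h3'⟩ := hM q0 hq0 p0 hp0 (Ne.symm hpq0)
          have hd := h3' hlt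
          simp only [Bool.false_eq_true, if_false] at hd
          exact absurd (hA q0 (subset_closure hq0) p0 (subset_closure hp0) hlt)
            (not_le_of_gt hd)
      set g : Fam := ⟨closure M, isClosed_closure, Or.inr (wkInc_closure hM)⟩ with hg
      have hpar : par g = false := if_neg hnotanti
      rw [← Set.diff_union_inter M (sP (closure M))]
      apply Set.Countable.union
      · exact diff_sP_countable subset_closure (Or.inr (wkInc_closure hM))
          (fun p hp q hq hne => ⟨(hM p hp q hq hne).1, (hM p hp q hq hne).2.1⟩)
      · apply Set.countable_of_injective_of_countable_image
          (f := (Prod.fst : II × II → II))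
        · intro p hp q hq he
          by_contra hne
          exact (hM p hp.1 q hq.1 hne).1 he
        · apply Set.Countable.mono _ (viol_countable (⇑j) hseg g)
          rintro x ⟨p, ⟨hpM, hpsP⟩, rfl⟩
          refine ⟨p.2, hpsP, ?_⟩
          rw [hpar]
          have hb := hbi p hpM
          cases h1 : phi (⇑j) p.1 <;> cases h2 : phi (⇑j) p.2 <;>
            rw [h2] at hb <;> simp <;> exact hb h1

theorem boxOpen_isFsigma {φ : II → Bool} (hφ : GoodColoring φ) {W : Set (II × II)}
    (hW : BoxOpen φ W) : IsFsigma W := by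
  classical
  have hchoice : ∀ z : II × II, ∃ ε, 0 < ε ∧ (z ∈ W → ∀ z' : II × II,
      z'.1 ∈ K z.1 ε (φ z.1) → z'.2 ∈ K z.2 ε (φ z.2) → z' ∈ W) := by
    intro z
    by_cases hz : z ∈ W
    · obtain ⟨ε, hε, h⟩ := hW z hz; exact ⟨ε, hε, fun _ => h⟩
    · exact ⟨1, one_pos, fun h => absurd h hz⟩
  choose eps heps hbox using hchoice
  set V : Set (II × II) :=
    ⋃ z ∈ W, (oK z.1 (eps z) (φ z.1)) ×ˢ (oK z.2 (eps z) (φ z.2)) with hVdef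
  have hVopen : IsOpen V := isOpen_biUnion fun z _ => (isOpen_oK _ _ _).prod (isOpen_oK _ _ _)
  have hVW : V ⊆ W := by
    intro u hu
    obtain ⟨z, hz, hu2⟩ := Set.mem_iUnion₂.1 hu
    exact hbox z hz u (oK_subset_K _ _ _ hu2.1) (oK_subset_K _ _ _ hu2.2)
  -- each piece of the residue is covered by countably many lines
  have piece : ∀ (c d : Bool) (n j k : ℕ),
      ∃ A B : Set II, A.Countable ∧ B.Countable ∧
      {z : II × II | z ∈ W \ V ∧ φ z.1 = c ∧ φ z.2 = d ∧ 1/((n:ℝ)+1) < eps z ∧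
        ((j:ℝ) * (1/(2*((n:ℝ)+1))) ≤ (z.1:ℝ) ∧ (z.1:ℝ) ≤ ((j:ℝ)+1) * (1/(2*((n:ℝ)+1)))) ∧
        ((k:ℝ) * (1/(2*((n:ℝ)+1))) ≤ (z.2:ℝ) ∧ (z.2:ℝ) ≤ ((k:ℝ)+1) * (1/(2*((n:ℝ)+1))))}
        ⊆ {z | z.1 ∈ A ∨ z.2 ∈ B} := by
    intro c d n j k
    apply piece_lines hφ c d
    · exact fun p hp => hp.2.1
    · exact fun p hp => hp.2.2.1
    · rintro p hp q hq ⟨h1, h2⟩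
      obtain ⟨⟨hpW, hpV⟩, hpc, hpd, hpe, ⟨hpj1, hpj2⟩, ⟨hpk1, hpk2⟩⟩ := hp
      obtain ⟨⟨hqW, hqV⟩, hqc, hqd, hqe, ⟨hqj1, hqj2⟩, ⟨hqk1, hqk2⟩⟩ := hq
      apply hqV
      have hhalf : 2 * (1/(2*((n:ℝ)+1))) < eps p := by
        have : (2:ℝ) * (1/(2*((n:ℝ)+1))) = 1/((n:ℝ)+1) := by
          field_simp
        rw [this]; exact hpe
      have hfst : q.1 ∈ oK p.1 (eps p) (φ p.1) := by
        rw [hpc]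
        cases c
        · simp only [Bool.false_eq_true, if_false] at h1
          exact ⟨by linarith, h1⟩
        · simp only [if_true] at h1
          exact ⟨h1, by linarith⟩
      have hsnd : q.2 ∈ oK p.2 (eps p) (φ p.2) := by
        rw [hpd]
        cases d
        · simp only [Bool.false_eq_true, if_false] at h2
          exact ⟨by linarith, h2⟩
        · simp only [if_true] at h2
          exact ⟨h2, by linarith⟩
      exact Set.mem_biUnion hpW (Set.mk_mem_prod hfst hsnd)
  have hlines : ∃ A B : Set II, A.Countable ∧ B.Countable ∧
      W \ V ⊆ {z | z.1 ∈ A ∨ z.2 ∈ B} := by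
    choose A B hA hB hsub using fun (i : Bool × Bool × ℕ × ℕ × ℕ) =>
      piece i.1 i.2.1 i.2.2.1 i.2.2.2.1 i.2.2.2.2
    refine ⟨⋃ i, A i, ⋃ i, B i, Set.countable_iUnion hA, Set.countable_iUnion hB, ?_⟩
    intro z hz
    obtain ⟨n, hn⟩ := exists_nat_one_div_lt (heps z)
    have h2pos : (0:ℝ) < 1/(2*((n:ℝ)+1)) := by positivity
    set hf : ℝ := 1/(2*((n:ℝ)+1)) with hhf
    set j := ⌊(z.1:ℝ)/hf⌋₊ with hj
    set k := ⌊(z.2:ℝ)/hf⌋₊ with hk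
    have hz1 : (0:ℝ) ≤ (z.1:ℝ) := z.1.2.1
    have hz2 : (0:ℝ) ≤ (z.2:ℝ) := z.2.2.1
    have hj1 : (j:ℝ) * hf ≤ (z.1:ℝ) := by
      have := Nat.floor_le (div_nonneg hz1 (le_of_lt h2pos))
      calc (j:ℝ) * hf ≤ ((z.1:ℝ)/hf) * hf := by
            apply mul_le_mul_of_nonneg_right this (le_of_lt h2pos)
        _ = (z.1:ℝ) := by field_simp
    have hj2 : (z.1:ℝ) ≤ ((j:ℝ)+1) * hf := by
      have := le_of_lt (Nat.lt_floor_add_one ((z.1:ℝ)/hf))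
      calc (z.1:ℝ) = ((z.1:ℝ)/hf) * hf := by field_simp
        _ ≤ ((j:ℝ)+1) * hf := mul_le_mul_of_nonneg_right this (le_of_lt h2pos)
    have hk1 : (k:ℝ) * hf ≤ (z.2:ℝ) := by
      have := Nat.floor_le (div_nonneg hz2 (le_of_lt h2pos))
      calc (k:ℝ) * hf ≤ ((z.2:ℝ)/hf) * hf := by
            apply mul_le_mul_of_nonneg_right this (le_of_lt h2pos)
        _ = (z.2:ℝ) := by field_simp
    have hk2 : (z.2:ℝ) ≤ ((k:ℝ)+1) * hf := by
      have := le_of_lt (Nat.lt_floor_add_one ((z.2:ℝ)/hf))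
      calc (z.2:ℝ) = ((z.2:ℝ)/hf) * hf := by field_simp
        _ ≤ ((k:ℝ)+1) * hf := mul_le_mul_of_nonneg_right this (le_of_lt h2pos)
    have := hsub (φ z.1, φ z.2, n, j, k)
      ⟨hz, rfl, rfl, by exact_mod_cast hn, ⟨hj1, hj2⟩, ⟨hk1, hk2⟩⟩
    rcases this with h | h
    · exact Or.inl (Set.mem_iUnion.2 ⟨_, h⟩)
    · exact Or.inr (Set.mem_iUnion.2 ⟨_, h⟩)
  -- Fσ-ness of vertical and horizontal traces
  have vtrace : ∀ a : II, IsFsigma (W ∩ {z | z.1 = a}) := by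
    intro a
    obtain ⟨O, C, hO, hC, hτ, hOτ⟩ := oneDim {y : II | (a, y) ∈ W} φ (fun y => eps (a, y))
      (fun y _ => heps _)
      (fun y hy t ht => hbox (a,y) hy (a,t) (mem_K_self _ (heps _) _) ht)
    have htr : W ∩ {z | z.1 = a} = ({a} ×ˢ O) ∪ ({a} ×ˢ C) := by
      rw [← Set.prod_union, ← hτ]
      ext z
      simp only [Set.mem_inter_iff, Set.mem_setOf_eq, Set.mem_prod, Set.mem_singleton_iff]
      constructor
      · rintro ⟨hzW, hz1⟩
        refine ⟨hz1, ?_⟩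
        show (a, z.2) ∈ W
        have he : (a, z.2) = z := by rw [← hz1]
        rw [he]; exact hzW
      · rintro ⟨hz1, hz2⟩
        have he : (a, z.2) = z := by rw [← hz1]
        refine ⟨?_, hz1⟩
        rw [← he]; exact hz2
    rw [htr]
    apply IsFsigma.union
    · obtain ⟨F, hFc, hFu⟩ := IsOpen.isFsigma hO
      rw [hFu, Set.prod_iUnion]
      exact isFsigma_iUnion _ fun n => IsFsigma.of_isClosed (isClosed_singleton.prod (hFc n))
    · exact Countable.isFsigma ((Set.countable_singleton a).prod hC)
  have htrace : ∀ b : II, IsFsigma (W ∩ {z | z.2 = b}) := by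
    intro b
    obtain ⟨O, C, hO, hC, hτ, hOτ⟩ := oneDim {x : II | (x, b) ∈ W} φ (fun x => eps (x, b))
      (fun x _ => heps _)
      (fun x hx t ht => hbox (x,b) hx (t,b) ht (mem_K_self _ (heps _) _))
    have htr : W ∩ {z | z.2 = b} = (O ×ˢ {b}) ∪ (C ×ˢ {b}) := by
      rw [← Set.union_prod, ← hτ]
      ext z
      simp only [Set.mem_inter_iff, Set.mem_setOf_eq, Set.mem_prod, Set.mem_singleton_iff]
      constructor
      · rintro ⟨hzW, hz2⟩
        refine ⟨?_, hz2⟩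
        show (z.1, b) ∈ W
        have he : (z.1, b) = z := by rw [← hz2]
        rw [he]; exact hzW
      · rintro ⟨hz1, hz2⟩
        have he : (z.1, b) = z := by rw [← hz2]
        refine ⟨?_, hz2⟩
        rw [← he]; exact hz1
    rw [htr]
    apply IsFsigma.union
    · obtain ⟨F, hFc, hFu⟩ := IsOpen.isFsigma hO
      rw [hFu, Set.iUnion_prod_const]
      exact isFsigma_iUnion _ fun n => IsFsigma.of_isClosed ((hFc n).prod isClosed_singleton)
    · exact Countable.isFsigma (hC.prod (Set.countable_singleton b))
  obtain ⟨A, B, hA, hB, hsub⟩ := hlines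
  have hWdec : W = V ∪ ((⋃ a ∈ A, W ∩ {z | z.1 = a}) ∪ (⋃ b ∈ B, W ∩ {z | z.2 = b})) := by
    apply Set.Subset.antisymm
    · intro z hz
      by_cases hzV : z ∈ V
      · exact Or.inl hzV
      · rcases hsub ⟨hz, hzV⟩ with h | h
        · exact Or.inr (Or.inl (Set.mem_biUnion h ⟨hz, rfl⟩))
        · exact Or.inr (Or.inr (Set.mem_biUnion h ⟨hz, rfl⟩))
    · rintro z (hz | hz | hz)
      · exact hVW hz
      · obtain ⟨a, _, hza, _⟩ := Set.mem_iUnion₂.1 hz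
        exact hza
      · obtain ⟨b, _, hzb, _⟩ := Set.mem_iUnion₂.1 hz
        exact hzb
  rw [hWdec]
  exact IsFsigma.union (IsOpen.isFsigma hVopen) (IsFsigma.union
    (isFsigma_biUnion hA _ fun a _ => vtrace a)
    (isFsigma_biUnion hB _ fun b _ => htrace b))

theorem split_nbhd {V : Set SplitInterval} (hV : IsOpen V) (x : II) (c : Bool)
    (hx : toLex (x, c) ∈ V) :
    ∃ ε > (0:ℝ), ∀ t : II, t ∈ K x ε c → ∀ b : Bool, (t = x → b = c) → toLex (t, b) ∈ V := by
  cases c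
  · -- c = false
    by_cases hx0 : (x:ℝ) = 0
    · refine ⟨1, one_pos, fun t ht b hb => ?_⟩
      have htx : t = x := by
        have h1 : (t:ℝ) ≤ (x:ℝ) := ht.2
        have h2 : (x:ℝ) ≤ (t:ℝ) := by rw [hx0]; exact t.2.1
        exact Subtype.ext (le_antisymm h1 h2)
      rw [htx, hb htx]; exact hx
    · have hx0' : (0:ℝ) < (x:ℝ) := lt_of_le_of_ne x.2.1 (Ne.symm hx0)
      have hl : ∃ l : SplitInterval, l < toLex (x, false) :=
        ⟨toLex ((⟨0, by constructor <;> norm_num⟩ : II), false), by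
          rw [Prod.Lex.lt_iff]; left; exact Subtype.mk_lt_mk.2 hx0'⟩
      have hu : ∃ u : SplitInterval, toLex (x, false) < u :=
        ⟨toLex (x, true), by rw [Prod.Lex.lt_iff]; right; exact ⟨rfl, Bool.false_lt_true⟩⟩
      obtain ⟨l', u', hmem, hsub⟩ :=
        (mem_nhds_iff_exists_Ioo_subset' hl hu).1 (hV.mem_nhds hx)
      set lp : II × Bool := ofLex l' with hlp
      have hl't : l' = toLex lp := rfl
      have hlt : lp.1 < x := by
        have := hmem.1
        rw [hl't, Prod.Lex.lt_iff] at this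
        rcases this with h | ⟨_, h⟩
        · exact h
        · exact absurd h (by simp [Bool.lt_iff])
      refine ⟨(x:ℝ) - (lp.1:ℝ), by simp [Subtype.coe_lt_coe.2 hlt], fun t ht b hb => ?_⟩
      apply hsub
      constructor
      · rw [hl't, Prod.Lex.lt_iff]
        left
        have : (lp.1:ℝ) < (t:ℝ) := by
          have h := ht.1; linarith
        exact Subtype.coe_lt_coe.1 this
      · have hxu := hmem.2
        rw [show u' = toLex (ofLex u') from rfl, Prod.Lex.lt_iff] at hxu ⊢
        have ht2 : t ≤ x := ht.2
        rcases lt_or_eq_of_le ht2 with htx | htx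
        · rcases hxu with h | ⟨h1, h2⟩
          · left; exact lt_trans htx h
          · left; rw [← h1]; exact htx
        · rcases hxu with h | ⟨h1, h2⟩
          · left; rw [htx]; exact h
          · right
            refine ⟨by rw [htx]; exact h1, ?_⟩
            rw [hb htx]
            rw [Bool.lt_iff] at h2 ⊢
            exact ⟨rfl, h2.2⟩
  · -- c = true
    by_cases hx1 : (x:ℝ) = 1
    · refine ⟨1, one_pos, fun t ht b hb => ?_⟩
      have htx : t = x := by
        have h2 : (t:ℝ) ≤ (x:ℝ) := by rw [hx1]; exact t.2.2
        exact Subtype.ext (le_antisymm h2 (Subtype.coe_le_coe.2 ht.1))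
      rw [htx, hb htx]; exact hx
    · have hx1' : (x:ℝ) < 1 := lt_of_le_of_ne x.2.2 hx1
      have hl : ∃ l : SplitInterval, l < toLex (x, true) :=
        ⟨toLex (x, false), by rw [Prod.Lex.lt_iff]; right; exact ⟨rfl, Bool.false_lt_true⟩⟩
      have hu : ∃ u : SplitInterval, toLex (x, true) < u :=
        ⟨toLex ((⟨1, by constructor <;> norm_num⟩ : II), true), by
          rw [Prod.Lex.lt_iff]; left; exact Subtype.mk_lt_mk.2 hx1'⟩
      obtain ⟨l', u', hmem, hsub⟩ :=
        (mem_nhds_iff_exists_Ioo_subset' hl hu).1 (hV.mem_nhds hx)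
      set up : II × Bool := ofLex u' with hup
      have hu't : u' = toLex up := rfl
      have hut : x < up.1 := by
        have := hmem.2
        rw [hu't, Prod.Lex.lt_iff] at this
        rcases this with h | ⟨_, h⟩
        · exact h
        · exact absurd h (by simp [Bool.lt_iff])
      refine ⟨(up.1:ℝ) - (x:ℝ), by simp [Subtype.coe_lt_coe.2 hut], fun t ht b hb => ?_⟩
      apply hsub
      constructor
      · have hxl := hmem.1
        rw [show l' = toLex (ofLex l') from rfl, Prod.Lex.lt_iff] at hxl ⊢
        have ht1 : x ≤ t := ht.1
        rcases lt_or_eq_of_le ht1 with htx | htx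
        · rcases hxl with h | ⟨h1, h2⟩
          · left; exact lt_trans h htx
          · left; rw [h1]; exact htx
        · rcases hxl with h | ⟨h1, h2⟩
          · left; rw [← htx]; exact h
          · right
            refine ⟨by rw [← htx, h1]; rfl, ?_⟩
            rw [hb htx.symm]
            rw [Bool.lt_iff] at h2 ⊢
            exact ⟨h2.1, rfl⟩
      · rw [hu't, Prod.Lex.lt_iff]
        left
        have : (t:ℝ) < (up.1:ℝ) := by
          have h := ht.2; linarith
        exact Subtype.coe_lt_coe.1 this

theorem preimage_boxOpen (φ : II → Bool) (U : Set (SplitInterval × SplitInterval))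
    (hU : IsOpen U) :
    BoxOpen φ ((fun z : II × II => (toLex (z.1, φ z.1), toLex (z.2, φ z.2))) ⁻¹' U) := by
  intro z hz
  rw [Set.mem_preimage] at hz
  obtain ⟨V₁, V₂, hV₁, hV₂, hm1, hm2, hsub⟩ := isOpen_prod_iff.1 hU _ _ hz
  obtain ⟨ε₁, hε₁, h₁⟩ := split_nbhd hV₁ z.1 (φ z.1) hm1
  obtain ⟨ε₂, hε₂, h₂⟩ := split_nbhd hV₂ z.2 (φ z.2) hm2
  refine ⟨min ε₁ ε₂, lt_min hε₁ hε₂, fun z' hz1 hz2 => ?_⟩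
  rw [Set.mem_preimage]
  apply hsub
  exact Set.mk_mem_prod
    (h₁ z'.1 (K_mono _ (min_le_left _ _) _ hz1) (φ z'.1) (fun h => by rw [h]))
    (h₂ z'.2 (K_mono _ (min_le_right _ _) _ hz2) (φ z'.2) (fun h => by rw [h]))

end
end SplitSel

/-- Under CH (`ω₁ = 𝔠`), the multimap `P⁻¹ : [0,1]² ⊸ Ï²` admits an
Fσ-measurable selection. -/
theorem Fsigma_selection_of_CH (hch : Cardinal.aleph 1 = Cardinal.continuum) :
    ∃ s : Set.Icc (0:ℝ) 1 × Set.Icc (0:ℝ) 1 → SplitInterval × SplitInterval,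
      (∀ z, splitProjSq (s z) = z) ∧
      ∀ U : Set (SplitInterval × SplitInterval), IsOpen U → IsFsigma (s ⁻¹' U) := by
  obtain ⟨φ, hφ⟩ := SplitSel.exists_goodColoring hch
  refine ⟨fun z => (toLex (z.1, φ z.1), toLex (z.2, φ z.2)), fun z => rfl, fun U hU => ?_⟩
  exact SplitSel.boxOpen_isFsigma hφ (SplitSel.preimage_boxOpen φ U hU)
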